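/- The function u(x,t) = 3β sech²((√β/2)(x − βt − aW(t))) is a pathwise solution of the stochastic KdV equation d_t u + (u u_x + u_{xxx}) dt + a u_x ∘ dW_t = 0 for every β > 0 and a ∈ ℝ. -/

import Mathlib

/-- The soliton profile in the stochastic moving frame:
`u(t,x) = 3β sech²((√β/2)(x − βt − aW(t)))`. -/
noncomputable def soliton (β a : ℝ) (W : ℝ → ℝ) (t x : ℝ) : ℝ :=
  3 * β * (1 / Real.cosh (Real.sqrt β / 2 * (x - β * t - a * W t))) ^ 2

noncomputable def F0 (β c x : ℝ) : ℝ := 3 * β * (1 / Real.cosh (c * x)) ^ 2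
noncomputable def F1 (β c x : ℝ) : ℝ :=
  -6 * β * c * Real.sinh (c * x) / Real.cosh (c * x) ^ 3
noncomputable def F2 (β c x : ℝ) : ℝ :=
  -6 * β * c ^ 2 * (Real.cosh (c * x) ^ 2 - 3 * Real.sinh (c * x) ^ 2) / Real.cosh (c * x) ^ 4
noncomputable def F3 (β c x : ℝ) : ℝ :=
  24 * β * c ^ 3 * Real.sinh (c * x) * (2 * Real.cosh (c * x) ^ 2 - 3 * Real.sinh (c * x) ^ 2)
    / Real.cosh (c * x) ^ 5

lemma hcosh (c x : ℝ) : HasDerivAt (fun y => Real.cosh (c * y)) (c * Real.sinh (c * x)) x := by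
  have := (Real.hasDerivAt_cosh (c * x)).comp x ((hasDerivAt_id x).const_mul c)
  simpa [mul_comm, Function.comp_def] using this

lemma hsinh (c x : ℝ) : HasDerivAt (fun y => Real.sinh (c * y)) (c * Real.cosh (c * x)) x := by
  have := (Real.hasDerivAt_sinh (c * x)).comp x ((hasDerivAt_id x).const_mul c)
  simpa [mul_comm, Function.comp_def] using this

lemma chne (z : ℝ) : Real.cosh z ≠ 0 := (Real.cosh_pos z).ne'

lemma hF0 (β c x : ℝ) : HasDerivAt (F0 β c) (F1 β c x) x := by
  have heq : F0 β c = fun y => 3 * β * ((Real.cosh (c * y))⁻¹) ^ 2 := by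
    funext y; simp [F0, one_div]
  rw [heq]
  have h : HasDerivAt (fun y => 3 * β * ((Real.cosh (c * y))⁻¹) ^ 2)
      (3 * β * (2 * ((Real.cosh (c * x))⁻¹) ^ 1 *
        (-(c * Real.sinh (c * x)) / Real.cosh (c * x) ^ 2))) x := by
    exact (((hcosh c x).inv (chne _)).pow 2).const_mul (3 * β)
  convert h using 1
  unfold F1
  have hch := chne (c * x)
  field_simp
  ring

lemma hF1 (β c x : ℝ) : HasDerivAt (F1 β c) (F2 β c x) x := by
  have hn : HasDerivAt (fun y => -6 * β * c * Real.sinh (c * y))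
      (-6 * β * c * (c * Real.cosh (c * x))) x := (hsinh c x).const_mul _
  have hd : HasDerivAt (fun y => Real.cosh (c * y) ^ 3)
      (3 * Real.cosh (c * x) ^ 2 * (c * Real.sinh (c * x))) x := by
    simpa [mul_comm, mul_assoc, mul_left_comm] using (hcosh c x).fun_pow 3
  have h := hn.fun_div hd (pow_ne_zero 3 (chne _))
  convert h using 1
  · rfl
  · rfl
  · rfl
  unfold F2
  have hch := chne (c * x)
  field_simp
  ring

lemma hF2 (β c x : ℝ) : HasDerivAt (F2 β c) (F3 β c x) x := by
  have hn : HasDerivAt (fun y => -6 * β * c ^ 2 * (Real.cosh (c * y) ^ 2 - 3 * Real.sinh (c * y) ^ 2))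
      (-6 * β * c ^ 2 * (2 * Real.cosh (c * x) * (c * Real.sinh (c * x))
        - 3 * (2 * Real.sinh (c * x) * (c * Real.cosh (c * x))))) x := by
    have h2 : HasDerivAt (fun y => Real.cosh (c * y) ^ 2)
        (2 * Real.cosh (c * x) * (c * Real.sinh (c * x))) x := by
      simpa [mul_comm, mul_assoc, mul_left_comm] using (hcosh c x).fun_pow 2
    have h3 : HasDerivAt (fun y => Real.sinh (c * y) ^ 2)
        (2 * Real.sinh (c * x) * (c * Real.cosh (c * x))) x := by
      simpa [mul_comm, mul_assoc, mul_left_comm] using (hsinh c x).fun_pow 2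
    exact (h2.sub (h3.const_mul 3)).const_mul _
  have hd : HasDerivAt (fun y => Real.cosh (c * y) ^ 4)
      (4 * Real.cosh (c * x) ^ 3 * (c * Real.sinh (c * x))) x := by
    simpa [mul_comm, mul_assoc, mul_left_comm] using (hcosh c x).fun_pow 4
  have h := hn.fun_div hd (pow_ne_zero 4 (chne _))
  convert h using 1
  · rfl
  · rfl
  · rfl
  unfold F3
  have hch := chne (c * x)
  field_simp
  ring

lemma derivx (k : ℝ) (F G : ℝ → ℝ) (hFG : ∀ x, HasDerivAt F (G x) x) :
    deriv (fun y => F (y - k)) = fun y => G (y - k) := by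
  funext y
  have h := (hFG (y - k)).comp y ((hasDerivAt_id y).sub_const k)
  simpa [Function.comp_def] using h.deriv

/-- **Stochastic travelling wave solution of the KdV equation.**
For every `β > 0` and `a ∈ ℝ`, the function
`u(x,t) = 3β sech²((√β/2)(x − βt − aW(t)))` is a pathwise solution of the
stochastic KdV equation `d_t u + (u u_x + u_{xxx}) dt + a u_x ∘ dW_t = 0`
(the noise being Stratonovich, the ordinary chain rule applies, so the equation
is expressed pathwise along differentiable driving paths `W`). -/
theorem stmt12 (β a : ℝ) (hβ : 0 < β) (W : ℝ → ℝ) (hW : Differentiable ℝ W) :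
    ∀ t x : ℝ,
      deriv (fun s => soliton β a W s x) t
        + soliton β a W t x * deriv (fun y => soliton β a W t y) x
        + deriv (deriv (deriv (fun y => soliton β a W t y))) x
        + a * deriv (fun y => soliton β a W t y) x * deriv W t = 0 := by
  intro t x
  set c : ℝ := Real.sqrt β / 2 with hc
  have hc2 : c ^ 2 = β / 4 := by
    rw [hc, div_pow, Real.sq_sqrt hβ.le]; norm_num
  set k : ℝ := β * t + a * W t with hk
  -- space function
  have hfun : (fun y => soliton β a W t y) = fun y => F0 β c (y - k) := by
    funext y; unfold soliton F0; rw [hc, hk]; ring_nf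
  have hd1 : deriv (fun y => soliton β a W t y) = fun y => F1 β c (y - k) := by
    rw [hfun]; exact derivx k _ _ (hF0 β c)
  have hd3 : deriv (deriv (deriv (fun y => soliton β a W t y))) = fun y => F3 β c (y - k) := by
    rw [hd1, derivx k _ _ (hF1 β c), derivx k _ _ (hF2 β c)]
  -- time derivative
  have hg : HasDerivAt (fun s => x - β * s - a * W s) (0 - β * 1 - a * deriv W t) t :=
    ((hasDerivAt_const t x).sub ((hasDerivAt_id t).const_mul β)).sub
      (((hW t).hasDerivAt).const_mul a)
  have htime : deriv (fun s => soliton β a W s x) t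
      = F1 β c (x - β * t - a * W t) * (0 - β * 1 - a * deriv W t) := by
    have h := ((hF0 β c (x - β * t - a * W t)).comp t hg)
    have heq : (fun s => soliton β a W s x) = F0 β c ∘ fun s => x - β * s - a * W s := by
      funext s; simp [soliton, F0, Function.comp, hc]
    rw [heq]
    exact h.deriv
  rw [htime, hd3]; simp only [hd1]
  have hξ : x - k = x - β * t - a * W t := by rw [hk]; ring
  have hsol : soliton β a W t x = F0 β c (x - β * t - a * W t) := by
    simp [soliton, F0, hc]
  rw [hξ, hsol]
  set ξ : ℝ := x - β * t - a * W t
  unfold F0 F1 F3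
  have hch := chne (c * ξ)
  have hpyth : Real.cosh (c * ξ) ^ 2 = Real.sinh (c * ξ) ^ 2 + 1 := Real.cosh_sq _
  field_simp
  linear_combination Real.sinh (c * ξ) * Real.sqrt β * β *
    ((6 * Real.cosh (c * ξ) ^ 2 - 9 * Real.sinh (c * ξ) ^ 2) * Real.sq_sqrt hβ.le + 9 * β * hpyth)
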